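/- Let A be a unital C*-algebra and let (𝒟, π) be a representation of A (viewed as a unital *-algebra) on a complex Hilbert space H. Then ‖π(a)ξ‖ ≤ ‖a‖·‖ξ‖ for every a ∈ A and every ξ ∈ 𝒟; that is, every representation of a unital C*-algebra by possibly unbounded operators is automatically norm-bounded. Consequently, if the representation is closed, then 𝒟 = H and π extends to a unital *-homomorphism from A into the C*-algebra B(H) of bounded operators on H. -/

import Mathlib

set_option linter.unusedSectionVars false

/-- A representation of a unital `⋆`-algebra `A` on a complex Hilbert space `H`:
a dense subspace `dom ⊆ H` together with a unital algebra homomorphism `π` from `A` into the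
endomorphisms of `dom` satisfying `⟪π a ξ, η⟫ = ⟪ξ, π (star a) η⟫`. -/
structure HilbertRep (A : Type*) [Ring A] [Algebra ℂ A] [StarRing A] [StarModule ℂ A]
    (H : Type*) [NormedAddCommGroup H] [InnerProductSpace ℂ H] where
  dom : Submodule ℂ H
  dense : Dense (dom : Set H)
  π : A → (dom →ₗ[ℂ] dom)
  π_one : π 1 = LinearMap.id
  π_mul : ∀ a b : A, π (a * b) = (π a).comp (π b)
  π_add : ∀ a b : A, π (a + b) = π a + π b
  π_smul : ∀ (c : ℂ) (a : A), π (c • a) = c • π a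
  π_star : ∀ (a : A) (ξ η : dom),
    (inner ℂ ((π a ξ : dom) : H) (η : H) : ℂ) = inner ℂ (ξ : H) ((π (star a) η : dom) : H)

variable {A : Type*} [NormedRing A] [StarRing A] [CStarRing A] [NormedAlgebra ℂ A]
  [CompleteSpace A] [StarModule ℂ A]
variable {H : Type*} [NormedAddCommGroup H] [InnerProductSpace ℂ H] [CompleteSpace H]

/-- The operator `π a` of a representation, as a partially defined (unbounded) linear
operator on `H`. -/
def HilbertRep.op (ρ : HilbertRep A H) (a : A) : H →ₗ.[ℂ] H :=
  ⟨ρ.dom, ρ.dom.subtype.comp (ρ.π a)⟩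

/-- A representation is *closed* if its domain is the intersection of the domains of the
closures of all the operators `π a`. -/
def HilbertRep.IsClosedRep (ρ : HilbertRep A H) : Prop :=
  (ρ.dom : Set H) = ⋂ a : A, ((ρ.op a).closure.domain : Set H)

private lemma exists_sqrt' [Nontrivial A] (a : A) :
    ∃ d : A, IsSelfAdjoint d ∧
      d * d = ((‖star a * a‖ : ℝ) : ℂ) • (1 : A) - star a * a := by
  letI : CStarAlgebra A := { }
  set b := star a * a with hb
  have hsa : IsSelfAdjoint b := IsSelfAdjoint.star_mul_self a
  refine ⟨cfc (fun t : ℝ => Real.sqrt (‖b‖ - t)) b, cfc_predicate _ _, ?_⟩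
  rw [← cfc_mul (fun t : ℝ => Real.sqrt (‖b‖ - t)) (fun t : ℝ => Real.sqrt (‖b‖ - t)) b]
  have h1 : cfc (fun t : ℝ => Real.sqrt (‖b‖ - t) * Real.sqrt (‖b‖ - t)) b
      = cfc (fun t : ℝ => ‖b‖ - t) b := by
    apply cfc_congr
    intro t ht
    have : |t| ≤ ‖b‖ := by
      simpa using spectrum.norm_le_norm_of_mem (𝕜 := ℝ) ht
    exact Real.mul_self_sqrt (by cases abs_le.mp this; linarith)
  rw [h1, cfc_sub (fun _ : ℝ => ‖b‖) (fun t : ℝ => t) b, cfc_const _ _, cfc_id' ℝ b,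
    Algebra.algebraMap_eq_smul_one]
  norm_num [← Complex.coe_smul]

private lemma pi_sub' (ρ : HilbertRep A H) (x y : A) : ρ.π (x - y) = ρ.π x - ρ.π y := by
  rw [sub_eq_add_neg, ρ.π_add, ← neg_one_smul ℂ y, ρ.π_smul]
  module

private lemma rep_bound' (ρ : HilbertRep A H) (a : A) (ξ : ρ.dom) :
    ‖((ρ.π a ξ : ρ.dom) : H)‖ ≤ ‖a‖ * ‖(ξ : H)‖ := by
  rcases subsingleton_or_nontrivial A with hA | hA
  · have h0 : ρ.π a = 0 := by
      have := ρ.π_smul 0 a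
      rw [Subsingleton.elim ((0:ℂ) • a) a] at this
      simpa using this
    rw [h0]
    simpa using by positivity
  obtain ⟨d, hd, hdd⟩ := exists_sqrt' a
  set b := star a * a with hb
  have key : (inner ℂ (ξ:H) (((ρ.π b ξ : ρ.dom)):H) : ℂ)
      = (‖((ρ.π a ξ : ρ.dom):H)‖ : ℂ)^2 := by
    rw [hb, ρ.π_mul]
    have h := (ρ.π_star a ξ (ρ.π a ξ)).symm
    simp only [LinearMap.comp_apply]
    rw [h]
    exact inner_self_eq_norm_sq_to_K (𝕜 := ℂ) _
  have key2 : (inner ℂ (ξ:H) (((ρ.π (d*d) ξ : ρ.dom)):H) : ℂ)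
      = (‖((ρ.π d ξ : ρ.dom):H)‖ : ℂ)^2 := by
    rw [ρ.π_mul]
    have h := (ρ.π_star d ξ (ρ.π d ξ)).symm
    rw [hd.star_eq] at h
    simp only [LinearMap.comp_apply]
    rw [h]
    exact inner_self_eq_norm_sq_to_K (𝕜 := ℂ) _
  rw [hdd, pi_sub', ρ.π_smul, ρ.π_one] at key2
  have key3 : ((‖b‖:ℝ):ℂ) * (‖(ξ:H)‖:ℂ)^2 - (‖((ρ.π a ξ : ρ.dom):H)‖ : ℂ)^2
      = (‖((ρ.π d ξ : ρ.dom):H)‖ : ℂ)^2 := by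
    rw [← key, ← key2]
    have expand : (((((((‖b‖:ℝ):ℂ) • (LinearMap.id : ρ.dom →ₗ[ℂ] ρ.dom) - ρ.π b) ξ : ρ.dom)) : H)
        : H) = ((‖b‖:ℝ):ℂ) • (ξ : H) - ((ρ.π b ξ : ρ.dom) : H) := rfl
    rw [expand, inner_sub_right, inner_smul_right, inner_self_eq_norm_sq_to_K (𝕜 := ℂ)]
    rfl
  have keyR : (‖b‖:ℝ) * ‖(ξ:H)‖^2 - ‖((ρ.π a ξ : ρ.dom):H)‖^2
      = ‖((ρ.π d ξ : ρ.dom):H)‖^2 := by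
    exact_mod_cast key3
  have hnb : ‖b‖ = ‖a‖ * ‖a‖ := CStarRing.norm_star_mul_self
  have h2 : ‖((ρ.π a ξ : ρ.dom):H)‖^2 ≤ (‖a‖ * ‖(ξ:H)‖)^2 := by
    nlinarith [sq_nonneg (‖((ρ.π d ξ : ρ.dom):H)‖)]
  exact (pow_le_pow_iff_left₀ (norm_nonneg _) (by positivity) two_ne_zero).mp h2

/-- The continuous extension of `π a` to all of `H`. -/
private noncomputable def Gmap (ρ : HilbertRep A H) (a : A) : H →L[ℂ] H :=
  ((ρ.dom.subtype.comp (ρ.π a)).mkContinuous ‖a‖ (fun ξ => rep_bound' ρ a ξ)).extend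
    (Submodule.subtypeL ρ.dom)

private lemma Gmap_apply (ρ : HilbertRep A H) (a : A) (ξ : ρ.dom) :
    Gmap ρ a (ξ : H) = ((ρ.π a ξ : ρ.dom) : H) :=
  ContinuousLinearMap.extend_eq _ ρ.dense.denseRange_val
    isUniformEmbedding_subtype_val.isUniformInducing _

private lemma mem_closure_dom (ρ : HilbertRep A H) (a : A) (x : H) :
    x ∈ (ρ.op a).closure.domain := by
  set T := ρ.op a with hT
  have hext : T ≤ (Gmap ρ a).toLinearMap.toPMap ⊤ := by
    refine ⟨le_top, fun ξ η h => ?_⟩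
    show ((ρ.π a ξ : ρ.dom) : H) = Gmap ρ a (η : H)
    rw [← h]; exact (Gmap_apply ρ a ξ).symm
  have hclosed : ((Gmap ρ a).toLinearMap.toPMap ⊤).IsClosed := by
    have hgr : ((((Gmap ρ a).toLinearMap.toPMap ⊤).graph : Submodule ℂ (H × H)) : Set (H × H))
        = {p : H × H | Gmap ρ a p.1 = p.2} := by
      ext ⟨u, v⟩
      simp only [SetLike.mem_coe, LinearPMap.mem_graph_iff, Set.mem_setOf_eq]
      constructor
      · rintro ⟨⟨w, hw⟩, h1, h2⟩
        simp only at h1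
        subst h1
        simpa [LinearMap.toPMap_apply] using h2
      · intro h
        exact ⟨⟨u, trivial⟩, rfl, by simpa [LinearMap.toPMap_apply] using h⟩
    rw [LinearPMap.IsClosed, hgr]
    exact isClosed_eq ((Gmap ρ a).continuous.comp continuous_fst) continuous_snd
  have hclosable : T.IsClosable := hclosed.isClosable.leIsClosable hext
  have hgraph := hclosable.graph_closure_eq_closure_graph
  have h1 : (x, Gmap ρ a x) ∈ closure ((fun y : H => (y, Gmap ρ a y)) '' (ρ.dom : Set H)) := by
    have hx : x ∈ closure (ρ.dom : Set H) := by rw [ρ.dense.closure_eq]; trivial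
    exact image_closure_subset_closure_image (by fun_prop) ⟨x, hx, rfl⟩
  have h2 : ((fun y : H => (y, Gmap ρ a y)) '' (ρ.dom : Set H)) ⊆ (T.graph : Set (H × H)) := by
    rintro _ ⟨y, hy, rfl⟩
    have he : Gmap ρ a y = T ⟨y, hy⟩ := Gmap_apply ρ a ⟨y, hy⟩
    show (y, Gmap ρ a y) ∈ T.graph
    rw [he]
    exact T.mem_graph ⟨y, hy⟩
  have h3 := closure_mono h2 h1
  rw [← Submodule.topologicalClosure_coe, SetLike.mem_coe, hgraph] at h3
  exact LinearPMap.mem_domain_of_mem_graph h3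

private lemma clm_ext_on (ρ : HilbertRep A H) (F₁ F₂ : H →L[ℂ] H)
    (hF : ∀ ξ : ρ.dom, F₁ (ξ : H) = F₂ (ξ : H)) : F₁ = F₂ := by
  have h := Continuous.ext_on ρ.dense F₁.continuous F₂.continuous
    (fun z hz => hF ⟨z, hz⟩)
  exact ContinuousLinearMap.ext fun x => congrFun h x

private lemma gstar (ρ : HilbertRep A H) (a : A) (x y : H) :
    (inner ℂ (Gmap ρ (star a) x) y : ℂ) = inner ℂ x (Gmap ρ a y) := by
  have step1 : ∀ (η : ρ.dom) (x : H),
      (inner ℂ (Gmap ρ (star a) x) (η : H) : ℂ) = inner ℂ x (Gmap ρ a (η : H)) := by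
    intro η x
    have hcont1 : Continuous fun z : H => (inner ℂ (Gmap ρ (star a) z) (η : H) : ℂ) :=
      (Gmap ρ (star a)).continuous.inner continuous_const
    have hcont2 : Continuous fun z : H => (inner ℂ z (Gmap ρ a (η : H)) : ℂ) :=
      continuous_id.inner continuous_const
    have h := Continuous.ext_on ρ.dense hcont1 hcont2 ?_
    · exact congrFun h x
    · intro z hz
      show (inner ℂ (Gmap ρ (star a) z) (η : H) : ℂ) = inner ℂ z (Gmap ρ a (η : H))
      rw [show Gmap ρ (star a) z = Gmap ρ (star a) ((⟨z, hz⟩ : ρ.dom) : H) from rfl,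
        Gmap_apply ρ (star a) ⟨z, hz⟩, Gmap_apply ρ a η]
      have := ρ.π_star (star a) ⟨z, hz⟩ η
      rwa [star_star] at this
  have hcont1 : Continuous fun y : H => (inner ℂ (Gmap ρ (star a) x) y : ℂ) :=
    continuous_const.inner continuous_id
  have hcont2 : Continuous fun y : H => (inner ℂ x (Gmap ρ a y) : ℂ) :=
    continuous_const.inner (Gmap ρ a).continuous
  have h := Continuous.ext_on ρ.dense hcont1 hcont2 (fun z hz => step1 ⟨z, hz⟩ x)
  exact congrFun h y

/-- The extension as a star algebra homomorphism. -/
private noncomputable def PhiHom (ρ : HilbertRep A H) : A →⋆ₐ[ℂ] (H →L[ℂ] H) where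
  toFun := Gmap ρ
  map_one' := clm_ext_on ρ _ _ fun ξ => by
    rw [Gmap_apply, ρ.π_one]; rfl
  map_mul' a b := clm_ext_on ρ _ _ fun ξ => by
    show Gmap ρ (a * b) (ξ : H) = Gmap ρ a (Gmap ρ b (ξ : H))
    rw [Gmap_apply, Gmap_apply ρ b ξ, Gmap_apply ρ a (ρ.π b ξ), ρ.π_mul]
    rfl
  map_zero' := clm_ext_on ρ _ _ fun ξ => by
    have h0 : ρ.π 0 = 0 := by simpa using ρ.π_smul 0 0
    rw [Gmap_apply, h0]; rfl
  map_add' a b := clm_ext_on ρ _ _ fun ξ => by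
    show Gmap ρ (a + b) (ξ : H) = Gmap ρ a (ξ : H) + Gmap ρ b (ξ : H)
    rw [Gmap_apply, Gmap_apply, Gmap_apply, ρ.π_add]
    rfl
  commutes' c := clm_ext_on ρ _ _ fun ξ => by
    show Gmap ρ (algebraMap ℂ A c) (ξ : H) = (algebraMap ℂ (H →L[ℂ] H) c) (ξ : H)
    rw [Algebra.algebraMap_eq_smul_one, Gmap_apply, ρ.π_smul, ρ.π_one]
    simp [Algebra.algebraMap_eq_smul_one]
  map_star' a := by
    rw [ContinuousLinearMap.star_eq_adjoint]
    exact (ContinuousLinearMap.eq_adjoint_iff _ _).mpr fun x y => gstar ρ a x y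

/-- Any (possibly unbounded) representation of a unital C*-algebra `A` on a Hilbert space is
automatically norm-bounded: `‖π a ξ‖ ≤ ‖a‖ * ‖ξ‖`.  Consequently a *closed* representation of
`A` has domain all of `H` and extends to a unital `⋆`-homomorphism `A → B(H)`. -/
theorem cstar_rep_bounded (ρ : HilbertRep A H) :
    (∀ (a : A) (ξ : ρ.dom), ‖((ρ.π a ξ : ρ.dom) : H)‖ ≤ ‖a‖ * ‖(ξ : H)‖) ∧
    (ρ.IsClosedRep → ρ.dom = ⊤ ∧
      ∃ Φ : A →⋆ₐ[ℂ] (H →L[ℂ] H), ∀ (a : A) (ξ : ρ.dom),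
        Φ a (ξ : H) = ((ρ.π a ξ : ρ.dom) : H)) := by
  refine ⟨fun a ξ => rep_bound' ρ a ξ, fun hcl => ⟨?_, ?_⟩⟩
  · refine Submodule.eq_top_iff'.2 fun x => ?_
    have hx : x ∈ (ρ.dom : Set H) := by
      rw [hcl, Set.mem_iInter]
      exact fun a => mem_closure_dom ρ a x
    exact hx
  · exact ⟨PhiHom ρ, fun a ξ => Gmap_apply ρ a ξ⟩
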